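/- For f : ℝ × ℝ → ℝ, define the Lorentzian metric g_f on ℝ³ (coordinates (x,y,z)) as the map assigning to each point p = (x,y,z) the symmetric bilinear form on ℝ³ given by g_f(p)(u,v) = −2·f(x,y)·u₁v₁ + u₂v₂ + u₁v₃ + u₃v₁. Let M = ℝ × (0,∞) × ℝ, let c ∈ ℝ with c ∉ {0,1,2}, and f(x,y) = y^c. Then for every λ > 0 and x₀, z₀ ∈ ℝ, the map T(x,y,z) = (λ^{(2−c)/2}·x + x₀, λ·y, λ^{(2+c)/2}·z + z₀) maps M bijectively onto M and is a homothety of g_f with factor λ²: for every p ∈ M and all u, v ∈ ℝ³, g_f(T(p))(DT_p u, DT_p v) = λ²·g_f(p)(u, v), where DT_p is the Fréchet derivative of T at p. -/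

import Mathlib

/-- The Walker Lorentzian metric on `ℝ³` determined by `f`:
`g_f(p)(u,v) = -2 f(x,y) u₁v₁ + u₂v₂ + u₁v₃ + u₃v₁` at `p = (x,y,z)`. -/
def gWalker (f : ℝ × ℝ → ℝ) (p : ℝ × ℝ × ℝ) (u v : ℝ × ℝ × ℝ) : ℝ :=
  -2 * f (p.1, p.2.1) * u.1 * v.1 + u.2.1 * v.2.1 + u.1 * v.2.2 + u.2.2 * v.1

theorem stmt9 (c : ℝ) (hc0 : c ≠ 0) (hc1 : c ≠ 1) (hc2 : c ≠ 2)
    (f : ℝ × ℝ → ℝ) (hf : ∀ q : ℝ × ℝ, f q = q.2 ^ c)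
    (M : Set (ℝ × ℝ × ℝ)) (hM : M = {p : ℝ × ℝ × ℝ | 0 < p.2.1})
    (lam x₀ z₀ : ℝ) (hlam : 0 < lam)
    (T : ℝ × ℝ × ℝ → ℝ × ℝ × ℝ)
    (hT : ∀ p : ℝ × ℝ × ℝ, T p =
      (lam ^ ((2 - c) / 2) * p.1 + x₀, lam * p.2.1, lam ^ ((2 + c) / 2) * p.2.2 + z₀)) :
    Set.BijOn T M M ∧
    ∀ p ∈ M, ∀ u v : ℝ × ℝ × ℝ,
      gWalker f (T p) (fderiv ℝ T p u) (fderiv ℝ T p v) = lam ^ 2 * gWalker f p u v := by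
  set A : ℝ := lam ^ ((2 - c) / 2) with hA
  set B : ℝ := lam ^ ((2 + c) / 2) with hB
  have hApos : 0 < A := Real.rpow_pos_of_pos hlam _
  have hBpos : 0 < B := Real.rpow_pos_of_pos hlam _
  have hAB : A * B = lam ^ 2 := by
    rw [hA, hB, ← Real.rpow_add hlam]
    norm_num
    rw [show ((2 - c) / 2 + (2 + c) / 2) = ((2 : ℕ) : ℝ) by push_cast; ring,
      Real.rpow_natCast]
  have hA2 : lam ^ c * (A * A) = lam ^ 2 := by
    rw [hA, ← Real.rpow_add hlam, ← Real.rpow_add hlam]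
    rw [show (c + ((2 - c) / 2 + (2 - c) / 2)) = ((2 : ℕ) : ℝ) by push_cast; ring,
      Real.rpow_natCast]
  -- the linear part of T
  set L : (ℝ × ℝ × ℝ) →L[ℝ] (ℝ × ℝ × ℝ) :=
    (A • ContinuousLinearMap.fst ℝ ℝ (ℝ × ℝ)).prod
      (((lam • ContinuousLinearMap.fst ℝ ℝ ℝ).comp (ContinuousLinearMap.snd ℝ ℝ (ℝ × ℝ))).prod
        ((B • ContinuousLinearMap.snd ℝ ℝ ℝ).comp (ContinuousLinearMap.snd ℝ ℝ (ℝ × ℝ)))) with hL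
  have hLapp : ∀ u : ℝ × ℝ × ℝ, L u = (A * u.1, lam * u.2.1, B * u.2.2) := by
    intro u; simp [hL, smul_eq_mul]
  have hTL : T = fun p => L p + (x₀, 0, z₀) := by
    funext p
    rw [hT p, hLapp p]
    simp [Prod.ext_iff]
  have hfd : ∀ p, fderiv ℝ T p = L := by
    intro p
    rw [hTL]
    exact ((L.hasFDerivAt (x := p)).add_const _).fderiv
  constructor
  · subst hM
    refine ⟨?_, ?_, ?_⟩
    · intro p hp
      simp only [Set.mem_setOf_eq] at hp ⊢
      rw [hT p]
      exact mul_pos hlam hp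
    · intro p _ q _ hpq
      rw [hT p, hT q, Prod.ext_iff, Prod.ext_iff] at hpq
      obtain ⟨h1, h2, h3⟩ := hpq
      simp only at h1 h2 h3
      have e1 : p.1 = q.1 := by
        have := mul_left_cancel₀ (ne_of_gt hApos) (by linarith : A * p.1 = A * q.1)
        exact this
      have e2 : p.2.1 = q.2.1 := mul_left_cancel₀ (ne_of_gt hlam) h2
      have e3 : p.2.2 = q.2.2 :=
        mul_left_cancel₀ (ne_of_gt hBpos) (by linarith : B * p.2.2 = B * q.2.2)
      exact Prod.ext e1 (Prod.ext e2 e3)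
    · intro q hq
      simp only [Set.mem_setOf_eq] at hq
      refine ⟨((q.1 - x₀) / A, q.2.1 / lam, (q.2.2 - z₀) / B), ?_, ?_⟩
      · simp only [Set.mem_setOf_eq]
        positivity
      · rw [hT]
        have : q = (q.1, q.2.1, q.2.2) := rfl
        rw [this]
        simp only [Prod.mk.injEq]
        refine ⟨?_, ?_, ?_⟩ <;> field_simp <;> ring
  · intro p hp u v
    subst hM
    simp only [Set.mem_setOf_eq] at hp
    rw [hfd, hLapp, hLapp]
    simp only [gWalker, hT p, hf]
    have hmul : (lam * p.2.1) ^ c = lam ^ c * p.2.1 ^ c :=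
      Real.mul_rpow hlam.le hp.le
    simp only [hmul]
    have hll : lam * lam = lam ^ 2 := by ring
    linear_combination (-2 * p.2.1 ^ c * u.1 * v.1) * hA2 + (u.2.1 * v.2.1) * hll +
      (u.1 * v.2.2 + u.2.2 * v.1) * hAB
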